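/- Nonnegativity of the squared maximum mean discrepancy: Let Z be a measurable space and k : Z × Z → ℝ a bounded measurable symmetric kernel that is positive semidefinite, i.e. ∑_{i,j=1}^N c_i c_j k(z_i, z_j) ≥ 0 for every N, all points z_1,…,z_N ∈ Z and all reals c_1,…,c_N. Then for all probability measures μ, ν on Z, D_k(μ, ν) := ∬ k d(μ⊗μ) − 2∬ k d(μ⊗ν) + ∬ k d(ν⊗ν) ≥ 0. -/

import Mathlib

open MeasureTheory

lemma mmd_aux_map_eval {α : Type*} [MeasurableSpace α] {N : ℕ} (m : Measure α)
    [IsProbabilityMeasure m] (i : Fin N) :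
    (Measure.pi (fun _ : Fin N => m)).map (fun ω => ω i) = m := by
  ext s hs
  rw [Measure.map_apply (measurable_pi_apply i) hs]
  have hpre : (fun ω : Fin N → α => ω i) ⁻¹' s
      = Set.pi Set.univ (fun l => if l = i then s else Set.univ) := by
    ext ω
    simp only [Set.mem_preimage, Set.mem_pi, Set.mem_univ, true_implies]
    constructor
    · intro h l; split <;> simp_all
    · intro h; have := h i; simpa using this
  rw [hpre, Measure.pi_pi]
  rw [Finset.prod_eq_single i (fun l _ hl => by simp [hl]) (by simp)]
  simp

lemma mmd_aux_map_pair {α : Type*} [MeasurableSpace α] {N : ℕ} (m : Measure α)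
    [IsProbabilityMeasure m] {i j : Fin N} (hij : i ≠ j) :
    (Measure.pi (fun _ : Fin N => m)).map (fun ω => (ω i, ω j)) = m.prod m := by
  refine (Measure.prod_eq fun s t hs ht => ?_).symm
  rw [Measure.map_apply ((measurable_pi_apply i).prodMk (measurable_pi_apply j)) (hs.prod ht)]
  have hpre : (fun ω : Fin N → α => (ω i, ω j)) ⁻¹' (s ×ˢ t)
      = Set.pi Set.univ (fun l => if l = i then s else if l = j then t else Set.univ) := by
    ext ω
    simp only [Set.mem_preimage, Set.mem_prod, Set.mem_pi, Set.mem_univ, true_implies]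
    constructor
    · rintro ⟨h1, h2⟩ l
      rcases eq_or_ne l i with rfl | hli
      · simp [h1]
      rcases eq_or_ne l j with rfl | hlj
      · simp [h2, hli]
      · simp [hli, hlj]
    · intro h
      have h1 := h i; have h2 := h j
      simp only [if_pos rfl] at h1
      rw [if_neg hij.symm, if_pos rfl] at h2
      exact ⟨h1, h2⟩
  rw [hpre, Measure.pi_pi]
  have : ∏ l, m (if l = i then s else if l = j then t else Set.univ) = m s * m t := by
    rw [← Finset.prod_subset (Finset.subset_univ {i, j}) (fun l _ hl => by
      simp only [Finset.mem_insert, Finset.mem_singleton, not_or] at hl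
      simp [hl.1, hl.2])]
    rw [Finset.prod_pair hij]
    simp [hij.symm]
  rw [this]

lemma mmd_aux_abs_integral_le {α : Type*} [MeasurableSpace α] (ρ : Measure α)
    [IsProbabilityMeasure ρ] (C : ℝ) (f : α → ℝ) (hf : ∀ x, |f x| ≤ C) :
    |∫ x, f x ∂ρ| ≤ C := by
  have h := norm_integral_le_of_norm_le_const (μ := ρ) (f := f) (C := C)
    (ae_of_all _ fun x => by rw [Real.norm_eq_abs]; exact hf x)
  simpa [Real.norm_eq_abs] using h

theorem squared_mmd_nonneg
    {Z : Type*} [MeasurableSpace Z]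
    (k : Z → Z → ℝ) (hk_meas : Measurable (Function.uncurry k))
    (C : ℝ) (hk_bdd : ∀ x y, |k x y| ≤ C)
    (hk_symm : ∀ x y, k x y = k y x)
    (hk_psd : ∀ (N : ℕ) (z : Fin N → Z) (c : Fin N → ℝ),
      0 ≤ ∑ i, ∑ j, c i * c j * k (z i) (z j))
    (μ ν : Measure Z) [IsProbabilityMeasure μ] [IsProbabilityMeasure ν] :
    0 ≤ (∫ p, k p.1 p.2 ∂(μ.prod μ)) - 2 * (∫ p, k p.1 p.2 ∂(μ.prod ν))
        + (∫ p, k p.1 p.2 ∂(ν.prod ν)) := by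
  have hkm : Measurable (fun p : Z × Z => k p.1 p.2) := hk_meas
  set A := ∫ p, k p.1 p.2 ∂(μ.prod μ) with hA
  set M := ∫ p, k p.1 p.2 ∂(μ.prod ν) with hM
  set B := ∫ p, k p.1 p.2 ∂(ν.prod ν) with hB
  set a := ∫ z, k z z ∂μ with ha
  set b := ∫ z, k z z ∂ν with hb
  -- bounds on the integrals
  have hAC : |A| ≤ C := mmd_aux_abs_integral_le (μ.prod μ) C _ (fun p => hk_bdd p.1 p.2)
  have hMC : |M| ≤ C := mmd_aux_abs_integral_le (μ.prod ν) C _ (fun p => hk_bdd p.1 p.2)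
  have hBC : |B| ≤ C := mmd_aux_abs_integral_le (ν.prod ν) C _ (fun p => hk_bdd p.1 p.2)
  have haC : |a| ≤ C := mmd_aux_abs_integral_le μ C _ (fun z => hk_bdd z z)
  have hbC : |b| ≤ C := mmd_aux_abs_integral_le ν C _ (fun z => hk_bdd z z)
  -- νμ integral equals μν integral
  have hM' : ∫ p, k p.1 p.2 ∂(ν.prod μ) = M := by
    rw [← Measure.prod_swap,
      integral_map measurable_swap.aemeasurable hkm.aestronglyMeasurable]
    simp only [Prod.fst_swap, Prod.snd_swap]
    rw [hM]
    congr 1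
    ext p
    exact hk_symm p.2 p.1
  -- the key per-N inequality
  have key : ∀ N : ℕ, 0 < N → 0 ≤ (A - 2*M + B) + (4*C)/N := by
    intro N hN
    set m : Measure (Z × Z) := μ.prod ν with hm
    set π : Measure (Fin N → Z × Z) := Measure.pi (fun _ => m) with hπ
    have hX : ∀ i : Fin N, Measurable (fun ω : Fin N → Z × Z => (ω i).1) :=
      fun i => (measurable_pi_apply i).fst
    have hY : ∀ i : Fin N, Measurable (fun ω : Fin N → Z × Z => (ω i).2) :=
      fun i => (measurable_pi_apply i).snd
    have int_pair : ∀ (f g : (Fin N → Z × Z) → Z), Measurable f → Measurable g →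
        Integrable (fun ω => k (f ω) (g ω)) π := by
      intro f g hf hg
      refine (integrable_const C).mono'
        ((hk_meas.comp (hf.prodMk hg)).aestronglyMeasurable)
        (ae_of_all _ fun ω => ?_)
      simpa [Real.norm_eq_abs] using hk_bdd (f ω) (g ω)
    have key_int : ∀ (f g : (Fin N → Z × Z) → Z), Measurable f → Measurable g →
        ∀ (ρ : Measure (Z × Z)), π.map (fun ω => (f ω, g ω)) = ρ →
        ∫ ω, k (f ω) (g ω) ∂π = ∫ p, k p.1 p.2 ∂ρ := by
      intro f g hf hg ρ hρ
      rw [← hρ, integral_map (hf.prodMk hg).aemeasurable hkm.aestronglyMeasurable]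
    -- maps
    have hmfst : m.map Prod.fst = μ := by rw [hm, Measure.map_fst_prod]; simp
    have hmsnd : m.map Prod.snd = ν := by rw [hm, Measure.map_snd_prod]; simp
    have hmapXX : ∀ {i j : Fin N}, i ≠ j →
        π.map (fun ω => ((ω i).1, (ω j).1)) = μ.prod μ := by
      intro i j hij
      have : (fun ω : Fin N → Z × Z => ((ω i).1, (ω j).1))
          = (Prod.map Prod.fst Prod.fst) ∘ (fun ω => (ω i, ω j)) := rfl
      rw [this, ← Measure.map_map (measurable_fst.prodMap measurable_fst)
        ((measurable_pi_apply i).prodMk (measurable_pi_apply j)),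
        mmd_aux_map_pair m hij,
        ← Measure.map_prod_map _ _ measurable_fst measurable_fst, hmfst]
    have hmapYY : ∀ {i j : Fin N}, i ≠ j →
        π.map (fun ω => ((ω i).2, (ω j).2)) = ν.prod ν := by
      intro i j hij
      have : (fun ω : Fin N → Z × Z => ((ω i).2, (ω j).2))
          = (Prod.map Prod.snd Prod.snd) ∘ (fun ω => (ω i, ω j)) := rfl
      rw [this, ← Measure.map_map (measurable_snd.prodMap measurable_snd)
        ((measurable_pi_apply i).prodMk (measurable_pi_apply j)),
        mmd_aux_map_pair m hij,
        ← Measure.map_prod_map _ _ measurable_snd measurable_snd, hmsnd]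
    have hmapXY : ∀ {i j : Fin N}, i ≠ j →
        π.map (fun ω => ((ω i).1, (ω j).2)) = μ.prod ν := by
      intro i j hij
      have : (fun ω : Fin N → Z × Z => ((ω i).1, (ω j).2))
          = (Prod.map Prod.fst Prod.snd) ∘ (fun ω => (ω i, ω j)) := rfl
      rw [this, ← Measure.map_map (measurable_fst.prodMap measurable_snd)
        ((measurable_pi_apply i).prodMk (measurable_pi_apply j)),
        mmd_aux_map_pair m hij,
        ← Measure.map_prod_map _ _ measurable_fst measurable_snd, hmfst, hmsnd]
    have hmapYX : ∀ {i j : Fin N}, i ≠ j →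
        π.map (fun ω => ((ω i).2, (ω j).1)) = ν.prod μ := by
      intro i j hij
      have : (fun ω : Fin N → Z × Z => ((ω i).2, (ω j).1))
          = (Prod.map Prod.snd Prod.fst) ∘ (fun ω => (ω i, ω j)) := rfl
      rw [this, ← Measure.map_map (measurable_snd.prodMap measurable_fst)
        ((measurable_pi_apply i).prodMk (measurable_pi_apply j)),
        mmd_aux_map_pair m hij,
        ← Measure.map_prod_map _ _ measurable_snd measurable_fst, hmsnd, hmfst]
    -- diagonal maps
    have hmap_eval : ∀ i : Fin N, π.map (fun ω => ω i) = m := fun i => mmd_aux_map_eval m i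
    have hmapXiYi : ∀ i : Fin N, π.map (fun ω => ((ω i).1, (ω i).2)) = μ.prod ν := by
      intro i
      have : (fun ω : Fin N → Z × Z => ((ω i).1, (ω i).2)) = (fun ω => ω i) := rfl
      rw [this, hmap_eval i]
    have hmapYiXi : ∀ i : Fin N, π.map (fun ω => ((ω i).2, (ω i).1)) = ν.prod μ := by
      intro i
      have : (fun ω : Fin N → Z × Z => ((ω i).2, (ω i).1))
          = Prod.swap ∘ (fun ω => ω i) := rfl
      rw [this, ← Measure.map_map measurable_swap (measurable_pi_apply i), hmap_eval i,
        hm, Measure.prod_swap]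
    -- diagonal XX : law of (X i, X i) is μ.map (fun z => (z,z))
    have hdiagX : ∀ i : Fin N, ∫ ω, k (ω i).1 (ω i).1 ∂π = a := by
      intro i
      have hF : Measurable fun p : Z × Z => k p.1 p.1 :=
        hk_meas.comp (measurable_fst.prodMk measurable_fst)
      have e1 : ∫ ω, k (ω i).1 (ω i).1 ∂π = ∫ p, k p.1 p.1 ∂m := by
        rw [← hmap_eval i,
          integral_map (measurable_pi_apply i).aemeasurable hF.aestronglyMeasurable]
      have hG : Measurable fun z : Z => k z z :=
        hk_meas.comp (measurable_id.prodMk measurable_id)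
      have e2 : ∫ p, k p.1 p.1 ∂m = ∫ z, k z z ∂μ := by
        rw [← hmfst, integral_map measurable_fst.aemeasurable hG.aestronglyMeasurable]
      rw [e1, e2]
    have hdiagY : ∀ i : Fin N, ∫ ω, k (ω i).2 (ω i).2 ∂π = b := by
      intro i
      have hF : Measurable fun p : Z × Z => k p.2 p.2 :=
        hk_meas.comp (measurable_snd.prodMk measurable_snd)
      have e1 : ∫ ω, k (ω i).2 (ω i).2 ∂π = ∫ p, k p.2 p.2 ∂m := by
        rw [← hmap_eval i,
          integral_map (measurable_pi_apply i).aemeasurable hF.aestronglyMeasurable]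
      have hG : Measurable fun z : Z => k z z :=
        hk_meas.comp (measurable_id.prodMk measurable_id)
      have e2 : ∫ p, k p.2 p.2 ∂m = ∫ z, k z z ∂ν := by
        rw [← hmsnd, integral_map measurable_snd.aemeasurable hG.aestronglyMeasurable]
      rw [e1, e2]
    -- value of each (i,j) integral
    have hval : ∀ i j : Fin N,
        ∫ ω, (k (ω i).1 (ω j).1 - k (ω i).1 (ω j).2 - k (ω i).2 (ω j).1
          + k (ω i).2 (ω j).2) ∂π
        = (if i = j then a else A) - M - M + (if i = j then b else B) := by
      intro i j
      have E1 : ∫ ω, (k (ω i).1 (ω j).1 - k (ω i).1 (ω j).2) ∂π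
          = (∫ ω, k (ω i).1 (ω j).1 ∂π) - ∫ ω, k (ω i).1 (ω j).2 ∂π :=
        integral_sub (int_pair _ _ (hX i) (hX j)) (int_pair _ _ (hX i) (hY j))
      have E2 : ∫ ω, (k (ω i).1 (ω j).1 - k (ω i).1 (ω j).2 - k (ω i).2 (ω j).1) ∂π
          = (∫ ω, (k (ω i).1 (ω j).1 - k (ω i).1 (ω j).2) ∂π) - ∫ ω, k (ω i).2 (ω j).1 ∂π :=
        integral_sub ((int_pair _ _ (hX i) (hX j)).sub (int_pair _ _ (hX i) (hY j)))
          (int_pair _ _ (hY i) (hX j))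
      have E3 : ∫ ω, (k (ω i).1 (ω j).1 - k (ω i).1 (ω j).2 - k (ω i).2 (ω j).1
            + k (ω i).2 (ω j).2) ∂π
          = (∫ ω, (k (ω i).1 (ω j).1 - k (ω i).1 (ω j).2 - k (ω i).2 (ω j).1) ∂π)
            + ∫ ω, k (ω i).2 (ω j).2 ∂π :=
        integral_add (((int_pair _ _ (hX i) (hX j)).sub (int_pair _ _ (hX i) (hY j))).sub
          (int_pair _ _ (hY i) (hX j))) (int_pair _ _ (hY i) (hY j))
      rw [E3, E2, E1]
      rcases eq_or_ne i j with rfl | hij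
      · rw [if_pos rfl, if_pos rfl, hdiagX i, hdiagY i,
          key_int _ _ (hX i) (hY i) _ (hmapXiYi i),
          key_int _ _ (hY i) (hX i) _ (hmapYiXi i), hM', ← hM]
      · rw [if_neg hij, if_neg hij,
          key_int _ _ (hX i) (hX j) _ (hmapXX hij),
          key_int _ _ (hX i) (hY j) _ (hmapXY hij),
          key_int _ _ (hY i) (hX j) _ (hmapYX hij),
          key_int _ _ (hY i) (hY j) _ (hmapYY hij), hM', ← hA, ← hM, ← hB]
    -- pointwise nonnegativity
    have hpt : ∀ ω : Fin N → Z × Z,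
        0 ≤ ∑ i : Fin N, ∑ j : Fin N,
          (k (ω i).1 (ω j).1 - k (ω i).1 (ω j).2 - k (ω i).2 (ω j).1
            + k (ω i).2 (ω j).2) := by
      intro ω
      have h := hk_psd (N + N) (Fin.append (fun i => (ω i).1) (fun i => (ω i).2))
        (Fin.append (fun _ => (1:ℝ)) (fun _ => (-1:ℝ)))
      rw [Fin.sum_univ_add] at h
      simp only [Fin.sum_univ_add, Fin.append_left, Fin.append_right, one_mul, mul_one,
        neg_mul, mul_neg, neg_neg] at h
      refine le_trans h (le_of_eq ?_)
      simp only [Finset.sum_add_distrib, Finset.sum_sub_distrib, Finset.sum_neg_distrib]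
      ring
    have hint : ∀ i j : Fin N, Integrable (fun ω => k (ω i).1 (ω j).1 - k (ω i).1 (ω j).2
        - k (ω i).2 (ω j).1 + k (ω i).2 (ω j).2) π :=
      fun i j => (((int_pair _ _ (hX i) (hX j)).sub (int_pair _ _ (hX i) (hY j))).sub
        (int_pair _ _ (hY i) (hX j))).add (int_pair _ _ (hY i) (hY j))
    have h1 : (0:ℝ) ≤ ∫ ω, ∑ i : Fin N, ∑ j : Fin N,
        (k (ω i).1 (ω j).1 - k (ω i).1 (ω j).2 - k (ω i).2 (ω j).1
          + k (ω i).2 (ω j).2) ∂π := integral_nonneg hpt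
    rw [integral_finset_sum _ (fun i _ => integrable_finset_sum _ (fun j _ => hint i j))] at h1
    have h2 : (0:ℝ) ≤ ∑ i : Fin N, ∑ j : Fin N,
        ((if i = j then a else A) - M - M + (if i = j then b else B)) := by
      refine le_trans h1 (le_of_eq ?_)
      refine Finset.sum_congr rfl fun i _ => ?_
      rw [integral_finset_sum _ (fun j _ => hint i j)]
      exact Finset.sum_congr rfl fun j _ => hval i j
    -- evaluate the double sum
    have hsum : ∑ i : Fin N, ∑ j : Fin N,
        ((if i = j then a else A) - M - M + (if i = j then b else B))
        = (N:ℝ) * ((N:ℝ) * (A - 2*M + B) + (a - A) + (b - B)) := by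
      have hinner : ∀ i : Fin N, ∑ j : Fin N,
          ((if i = j then a else A) - M - M + (if i = j then b else B))
          = (N:ℝ) * (A - 2*M + B) + (a - A) + (b - B) := by
        intro i
        have e1 : ∀ j : Fin N, (if i = j then a else A) - M - M + (if i = j then b else B)
            = (A - 2*M + B) + ((if i = j then (a - A) else 0) + (if i = j then (b - B) else 0)) := by
          intro j; split <;> ring
        simp only [e1, Finset.sum_add_distrib, Finset.sum_const, Finset.card_univ,
          Fintype.card_fin, nsmul_eq_mul, Finset.sum_ite_eq, Finset.mem_univ, if_true]
        ring
      simp only [hinner, Finset.sum_const, Finset.card_univ, Fintype.card_fin, nsmul_eq_mul]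
    rw [hsum] at h2
    -- conclude
    have hNpos : (0:ℝ) < N := by exact_mod_cast hN
    have h3 : 0 ≤ (N:ℝ) * (A - 2*M + B) + (a - A) + (b - B) := by
      by_contra hcon
      push_neg at hcon
      nlinarith
    have h4 : -(4*C) ≤ (N:ℝ) * (A - 2*M + B) := by
      have := abs_le.mp hAC
      have := abs_le.mp hBC
      have := abs_le.mp haC
      have := abs_le.mp hbC
      linarith
    have h5 : -(4*C)/(N:ℝ) ≤ A - 2*M + B := by
      rw [div_le_iff₀ hNpos]
      nlinarith
    have : -((4*C)/(N:ℝ)) = -(4*C)/(N:ℝ) := (neg_div _ _).symm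
    linarith
  -- take the limit N → ∞
  have hlim : Filter.Tendsto (fun N : ℕ => (A - 2*M + B) + (4*C)/N) Filter.atTop
      (nhds ((A - 2*M + B) + 0)) :=
    Filter.Tendsto.add tendsto_const_nhds (tendsto_const_div_atTop_nhds_zero_nat _)
  have := ge_of_tendsto hlim (Filter.eventually_atTop.mpr ⟨1, fun N hN => key N hN⟩)
  linarith
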